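/- For every t ≥ 2 there exists a constant C_t > 0 such that every n-vertex graph H with more than ex(n, tK₂) edges and maximum degree at most n/3 contains at least C_t · n^t copies of tK₂ (t pairwise disjoint edges). -/

import Mathlib

open SimpleGraph

variable {V W : Type*}

/-- Two `Sym2` elements (edges) are vertex-disjoint. -/
def sym2Disjoint (e e' : Sym2 V) : Prop := ∀ v, v ∈ e → v ∉ e'

/-- Edge set of the copy of `G` in `H` given by an (injective) homomorphism. -/
def copyEdges (G : SimpleGraph V) (H : SimpleGraph W) (φ : G →g H) : Set (Sym2 W) :=
  Sym2.map φ '' G.edgeSet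

/-- The edge set `E` is `f`-free. -/
def IsFreeSet (f : Sym2 W → Sym2 W) (E : Set (Sym2 W)) : Prop := ∀ e ∈ E, f e ∉ E

/-- `f` is an edge mapping of `H` with `f e ≠ e` (equivalently `|f e ∩ e| ≤ 1`). -/
def IsEdgeMap (H : SimpleGraph W) (f : Sym2 W → Sym2 W) : Prop :=
  ∀ e ∈ H.edgeSet, f e ∈ H.edgeSet ∧ f e ≠ e

/-- `f` is an edge mapping of `H` with `f e ∩ e = ∅`. -/
def IsDisjEdgeMap (H : SimpleGraph W) (f : Sym2 W → Sym2 W) : Prop :=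
  ∀ e ∈ H.edgeSet, f e ∈ H.edgeSet ∧ sym2Disjoint e (f e)

/-- `H` contains a copy of `G` (as a not necessarily induced subgraph). -/
def Contains (G : SimpleGraph V) (H : SimpleGraph W) : Prop :=
  ∃ φ : G →g H, Function.Injective φ

/-- `H` has no `f`-free copy of `G`. -/
def NoFreeCopy (G : SimpleGraph V) (H : SimpleGraph W) (f : Sym2 W → Sym2 W) : Prop :=
  ∀ φ : G →g H, Function.Injective φ → ¬ IsFreeSet f (copyEdges G H φ)

/-- The Turán number `ex(n, G)`. -/
noncomputable def exNum (n : ℕ) (G : SimpleGraph V) : ℕ :=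
  sSup {m | ∃ H : SimpleGraph (Fin n), H.edgeSet.ncard = m ∧ ¬ Contains G H}

/-- The parameter `h(n, G)`. -/
noncomputable def hNum (n : ℕ) (G : SimpleGraph V) : ℕ :=
  sSup {m | ∃ (H : SimpleGraph (Fin n)) (f : Sym2 (Fin n) → Sym2 (Fin n)),
    H.edgeSet.ncard = m ∧ IsEdgeMap H f ∧ NoFreeCopy G H f}

/-- Independence number. -/
noncomputable def indepNum (G : SimpleGraph V) [Fintype V] : ℕ :=
  sSup {m | ∃ s : Finset V, (∀ v ∈ s, ∀ w ∈ s, ¬ G.Adj v w) ∧ s.card = m}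

/-- The matching `tK₂` on `Fin (2t)`: vertices `2i, 2i+1` are matched. -/
def matching (t : ℕ) : SimpleGraph (Fin (2*t)) :=
  SimpleGraph.fromRel (fun v w => (v : ℕ) / 2 = (w : ℕ) / 2)

/-- The star `K_{1,r}` on `Fin (r+1)`, with center `0`. -/
def starG (r : ℕ) : SimpleGraph (Fin (r+1)) :=
  SimpleGraph.fromRel (fun v _ => v = 0)


private lemma sym2Disjoint_symm {e e' : Sym2 V} (h : sym2Disjoint e e') : sym2Disjoint e' e :=
  fun v hv hv' => h v hv' hv

private lemma not_sym2Disjoint_self (e : Sym2 V) : ¬ sym2Disjoint e e := by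
  induction e using Sym2.ind with
  | _ x y => exact fun h => h x (Sym2.mem_mk_left x y) (Sym2.mem_mk_left x y)

open Finset in
open scoped Classical in
private lemma matchCount (n : ℕ) (E : Finset (Sym2 (Fin n))) (D : ℝ)
    (hblock : ∀ e ∈ E, (((E.filter (fun e' => ¬ sym2Disjoint e e')).card : ℝ)) ≤ D) :
    ∀ t : ℕ, (∀ i : ℕ, i < t → (i : ℝ) * D ≤ (E.card : ℝ)) →
    ∏ i ∈ Finset.range t, ((E.card : ℝ) - i * D)
      ≤ (t.factorial : ℝ) * (((E.powersetCard t).filter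
          (fun s => ∀ e ∈ s, ∀ e' ∈ s, e ≠ e' → sym2Disjoint e e')).card : ℝ) := by
  intro t
  induction t with
  | zero =>
      intro _
      rw [Finset.powersetCard_zero, Finset.filter_singleton, if_pos (by intro e he; simp at he)]
      simp
  | succ t ih =>
      intro hle
      have hle' : ∀ i : ℕ, i < t → (i : ℝ) * D ≤ (E.card : ℝ) :=
        fun i hi => hle i (hi.trans (Nat.lt_succ_self t))
      have htD : (t : ℝ) * D ≤ (E.card : ℝ) := hle t (Nat.lt_succ_self t)
      set good : Finset (Sym2 (Fin n)) → Prop :=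
        fun s => ∀ e ∈ s, ∀ e' ∈ s, e ≠ e' → sym2Disjoint e e' with hgood
      set M : Finset (Finset (Sym2 (Fin n))) := (E.powersetCard t).filter good with hM
      set M' : Finset (Finset (Sym2 (Fin n))) := (E.powersetCard (t+1)).filter good with hM'
      set A : Finset (Sym2 (Fin n)) → Finset (Sym2 (Fin n)) :=
        fun s => E.filter (fun e => ∀ e' ∈ s, sym2Disjoint e e') with hA
      -- lower bound on each |A s|
      have hAcard : ∀ s ∈ M, (E.card : ℝ) - t * D ≤ ((A s).card : ℝ) := by
        intro s hs
        simp only [hM, Finset.mem_filter, Finset.mem_powersetCard] at hs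
        obtain ⟨⟨hsub, hcard⟩, hgs⟩ := hs
        have hsplit : (A s).card + (E.filter (fun e => ¬ ∀ e' ∈ s, sym2Disjoint e e')).card
            = E.card := Finset.card_filter_add_card_filter_not _
        have hBad : (E.filter (fun e => ¬ ∀ e' ∈ s, sym2Disjoint e e'))
            ⊆ s.biUnion (fun e' => E.filter (fun e'' => ¬ sym2Disjoint e' e'')) := by
          intro e he
          simp only [Finset.mem_filter] at he
          obtain ⟨heE, hne⟩ := he
          push_neg at hne
          obtain ⟨e', he's, hnd⟩ := hne
          refine Finset.mem_biUnion.2 ⟨e', he's, ?_⟩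
          exact Finset.mem_filter.2 ⟨heE, fun h => hnd (sym2Disjoint_symm h)⟩
        have hBadcard : ((E.filter (fun e => ¬ ∀ e' ∈ s, sym2Disjoint e e')).card : ℝ)
            ≤ (t : ℝ) * D := by
          calc ((E.filter (fun e => ¬ ∀ e' ∈ s, sym2Disjoint e e')).card : ℝ)
              ≤ ((s.biUnion (fun e' => E.filter (fun e'' => ¬ sym2Disjoint e' e''))).card : ℝ) := by
                exact_mod_cast Finset.card_le_card hBad
            _ ≤ (∑ e' ∈ s, (E.filter (fun e'' => ¬ sym2Disjoint e' e'')).card : ℕ) := by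
                exact_mod_cast Finset.card_biUnion_le
            _ = ∑ e' ∈ s, ((E.filter (fun e'' => ¬ sym2Disjoint e' e'')).card : ℝ) := by
                push_cast; ring
            _ ≤ ∑ _e' ∈ s, D := Finset.sum_le_sum (fun e' he' => hblock e' (hsub he'))
            _ = (t : ℝ) * D := by rw [Finset.sum_const, hcard]; simp [nsmul_eq_mul]
        have := hsplit
        have h2 : ((A s).card : ℝ)
            = (E.card : ℝ) - ((E.filter (fun e => ¬ ∀ e' ∈ s, sym2Disjoint e e')).card : ℝ) := by
          rw [← hsplit]; push_cast; ring
        rw [h2]; linarith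
      -- double counting
      set P : Finset ((_ : Finset (Sym2 (Fin n))) × Sym2 (Fin n)) := M.sigma A with hP
      set g : ((_ : Finset (Sym2 (Fin n))) × Sym2 (Fin n)) → Finset (Sym2 (Fin n)) :=
        fun p => insert p.2 p.1 with hg
      have hmemP : ∀ p ∈ P, p.1 ∈ M ∧ p.2 ∈ E ∧ (∀ e' ∈ p.1, sym2Disjoint p.2 e') ∧ p.2 ∉ p.1 := by
        intro p hp
        rw [hP, Finset.mem_sigma] at hp
        obtain ⟨h1, h2⟩ := hp
        rw [hA, Finset.mem_filter] at h2
        refine ⟨h1, h2.1, h2.2, fun hmem => not_sym2Disjoint_self p.2 (h2.2 p.2 hmem)⟩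
      have himg : Finset.image g P ⊆ M' := by
        intro m hm
        obtain ⟨p, hp, rfl⟩ := Finset.mem_image.1 hm
        obtain ⟨h1, h2, h3, h4⟩ := hmemP p hp
        rw [hM, Finset.mem_filter, Finset.mem_powersetCard] at h1
        obtain ⟨⟨hsub, hcard⟩, hgs⟩ := h1
        rw [hM', Finset.mem_filter, Finset.mem_powersetCard]
        refine ⟨⟨?_, ?_⟩, ?_⟩
        · exact Finset.insert_subset h2 hsub
        · rw [Finset.card_insert_of_notMem h4, hcard]
        · intro e he e' he' hne
          rcases Finset.mem_insert.1 he with rfl | he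
          · rcases Finset.mem_insert.1 he' with rfl | he'
            · exact absurd rfl hne
            · exact h3 e' he'
          · rcases Finset.mem_insert.1 he' with rfl | he'
            · exact sym2Disjoint_symm (h3 e he)
            · exact hgs e he e' he' hne
      have hfiber : ∀ m ∈ Finset.image g P, (P.filter (fun p => g p = m)).card ≤ t + 1 := by
        intro m hm
        have hmcard : m.card = t + 1 := by
          have := himg hm
          rw [hM', Finset.mem_filter, Finset.mem_powersetCard] at this
          exact this.1.2
        rw [← hmcard]
        apply Finset.card_le_card_of_injOn (fun p => p.2)
        · intro p hp
          rw [Finset.mem_coe, Finset.mem_filter] at hp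
          rw [← hp.2]
          exact Finset.mem_insert_self _ _
        · intro p hp q hq hpq
          simp only at hpq
          simp only [Finset.coe_filter, Set.mem_setOf_eq] at hp hq
          obtain ⟨hpP, hpm⟩ := hp
          obtain ⟨hqP, hqm⟩ := hq
          obtain ⟨_, _, _, hp4⟩ := hmemP p hpP
          obtain ⟨_, _, _, hq4⟩ := hmemP q hqP
          have h1 : p.1 = q.1 := by
            have h5 : insert p.2 p.1 = insert q.2 q.1 := by
              have := hpm; rw [← hqm] at this; exact this
            rw [hpq] at h5 hp4
            have h6 := congrArg (fun s => Finset.erase s q.2) h5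
            simpa [Finset.erase_insert, hp4, hq4, hpq] using h6
          exact Sigma.ext h1 (heq_of_eq hpq)
      have hPcard : P.card ≤ (t + 1) * M'.card := by
        calc P.card ≤ (t + 1) * (Finset.image g P).card :=
              Finset.card_le_mul_card_image P (t+1) hfiber
          _ ≤ (t + 1) * M'.card := by
              exact Nat.mul_le_mul_left _ (Finset.card_le_card himg)
      have hPsum : (P.card : ℝ) = ∑ s ∈ M, ((A s).card : ℝ) := by
        rw [hP, Finset.card_sigma]; push_cast; ring
      have hkey : ((E.card : ℝ) - t * D) * (M.card : ℝ) ≤ (t + 1) * (M'.card : ℝ) := by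
        calc ((E.card : ℝ) - t * D) * (M.card : ℝ)
            = ∑ _s ∈ M, ((E.card : ℝ) - t * D) := by rw [Finset.sum_const, nsmul_eq_mul]; ring
          _ ≤ ∑ s ∈ M, ((A s).card : ℝ) := Finset.sum_le_sum hAcard
          _ = (P.card : ℝ) := hPsum.symm
          _ ≤ (t + 1) * (M'.card : ℝ) := by exact_mod_cast hPcard
      have hfact : ((t+1).factorial : ℝ) = (t+1) * (t.factorial : ℝ) := by
        rw [Nat.factorial_succ]; push_cast; ring
      have hprod_nonneg : (0:ℝ) ≤ ∏ i ∈ Finset.range t, ((E.card : ℝ) - i * D) := by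
        apply Finset.prod_nonneg
        intro i hi
        have := hle i ((Finset.mem_range.1 hi).trans (Nat.lt_succ_self t))
        linarith
      have hfac_nonneg : (0:ℝ) ≤ (t.factorial : ℝ) := by positivity
      have hEt : (0:ℝ) ≤ (E.card : ℝ) - t * D := by linarith
      calc ∏ i ∈ Finset.range (t+1), ((E.card : ℝ) - i * D)
          = (∏ i ∈ Finset.range t, ((E.card : ℝ) - i * D)) * ((E.card : ℝ) - t * D) := by
            rw [Finset.prod_range_succ]
        _ ≤ ((t.factorial : ℝ) * (M.card : ℝ)) * ((E.card : ℝ) - t * D) :=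
            mul_le_mul_of_nonneg_right (ih hle') hEt
        _ = (t.factorial : ℝ) * (((E.card : ℝ) - t * D) * (M.card : ℝ)) := by ring
        _ ≤ (t.factorial : ℝ) * ((t + 1) * (M'.card : ℝ)) :=
            mul_le_mul_of_nonneg_left hkey hfac_nonneg
        _ = ((t+1).factorial : ℝ) * (M'.card : ℝ) := by rw [hfact]; ring


open Finset

private def hubGraph (k n : ℕ) : SimpleGraph (Fin n) :=
  SimpleGraph.fromRel (fun v w => (v : ℕ) < k ∧ ¬ ((w : ℕ) < k))

private lemma hubGraph_adj {k n : ℕ} {v w : Fin n} :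
    (hubGraph k n).Adj v w ↔ v ≠ w ∧
      (((v : ℕ) < k ∧ ¬ (w : ℕ) < k) ∨ ((w : ℕ) < k ∧ ¬ (v : ℕ) < k)) :=
  SimpleGraph.fromRel_adj _ v w

private lemma matching_adj {t : ℕ} {v w : Fin (2*t)} :
    (matching t).Adj v w ↔ v ≠ w ∧ (v : ℕ) / 2 = (w : ℕ) / 2 := by
  rw [matching, SimpleGraph.fromRel_adj]
  constructor
  · rintro ⟨h1, h2 | h2⟩
    · exact ⟨h1, h2⟩
    · exact ⟨h1, h2.symm⟩
  · rintro ⟨h1, h2⟩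
    exact ⟨h1, Or.inl h2⟩

private lemma hub_card (k n : ℕ) (hk : k ≤ n) :
    (univ.filter fun v : Fin n => (v : ℕ) < k).card = k := by
  have : (univ.filter fun v : Fin n => (v : ℕ) < k)
      = (Finset.range k).attachFin (fun m hm => lt_of_lt_of_le (Finset.mem_range.1 hm) hk) := by
    ext a
    simp [Finset.mem_attachFin, Finset.mem_range]
  rw [this, Finset.card_attachFin, Finset.card_range]

private lemma hub_card_le (k n : ℕ) :
    (univ.filter fun v : Fin n => (v : ℕ) < k).card ≤ k := by
  calc (univ.filter fun v : Fin n => (v : ℕ) < k).card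
      ≤ (Finset.range k).card := by
        apply Finset.card_le_card_of_injOn (fun v : Fin n => (v : ℕ))
        · intro a ha
          simp only [Finset.mem_coe, Finset.mem_filter] at ha
          exact Finset.mem_range.2 ha.2
        · exact fun a _ b _ h => Fin.ext h
    _ = k := Finset.card_range k

open scoped Classical in
private lemma hubGraph_edges (k n : ℕ) (hk : k ≤ n) :
    (hubGraph k n).edgeSet.ncard = k * (n - k) := by
  classical
  have hfin : (hubGraph k n).edgeFinset
      = (((univ.filter fun v : Fin n => (v : ℕ) < k) ×ˢ
          (univ.filter fun v : Fin n => ¬ (v : ℕ) < k)).image (fun p => s(p.1, p.2))) := by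
    ext e
    induction e using Sym2.ind with
    | _ a b =>
      simp only [mem_edgeFinset, Finset.mem_image, Finset.mem_product, Finset.mem_filter,
        Finset.mem_univ, true_and, mem_edgeSet]
      constructor
      · intro hadj
        rw [hubGraph_adj] at hadj
        obtain ⟨hne, h | h⟩ := hadj
        · exact ⟨(a, b), ⟨h.1, h.2⟩, rfl⟩
        · exact ⟨(b, a), ⟨h.1, h.2⟩, Sym2.eq_swap⟩
      · rintro ⟨⟨x, y⟩, ⟨hx, hy⟩, hxy⟩
        simp only at hx hy hxy
        have hne : x ≠ y := fun h => hy (h ▸ hx)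
        have hadj : (hubGraph k n).Adj x y := hubGraph_adj.2 ⟨hne, Or.inl ⟨hx, hy⟩⟩
        rcases Sym2.eq_iff.1 hxy with ⟨rfl, rfl⟩ | ⟨rfl, rfl⟩
        · exact hadj
        · exact hadj.symm
  have hinj : Set.InjOn (fun p : Fin n × Fin n => s(p.1, p.2))
      (((univ.filter fun v : Fin n => (v : ℕ) < k) ×ˢ
        (univ.filter fun v : Fin n => ¬ (v : ℕ) < k)) : Finset (Fin n × Fin n)) := by
    rintro ⟨a, b⟩ hab ⟨c, d⟩ hcd h
    simp only [Finset.coe_product, Set.mem_prod, Finset.coe_filter, Set.mem_setOf_eq,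
      Finset.mem_univ, true_and] at hab hcd
    simp only at h
    rcases Sym2.eq_iff.1 h with ⟨h1, h2⟩ | ⟨h1, h2⟩
    · simp [Prod.ext_iff, h1, h2]
    · exact absurd (h1 ▸ hab.1) hcd.2
  have hcount : (hubGraph k n).edgeSet.ncard = (hubGraph k n).edgeFinset.card := by
    rw [← SimpleGraph.coe_edgeFinset, Set.ncard_coe_finset]
  rw [hcount, hfin, Finset.card_image_of_injOn hinj, Finset.card_product, hub_card k n hk]
  congr 1
  have h2 := Finset.card_filter_add_card_filter_not
    (s := (univ : Finset (Fin n))) (fun v : Fin n => (v : ℕ) < k)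
  rw [hub_card k n hk, Finset.card_univ, Fintype.card_fin] at h2
  omega

private lemma hubGraph_not_contains (t n : ℕ) (ht : 1 ≤ t) :
    ¬ Contains (matching t) (hubGraph (t-1) n) := by
  rintro ⟨φ, hφ⟩
  have hadj : ∀ i : Fin t, (matching t).Adj ⟨2*(i:ℕ), by omega⟩ ⟨2*(i:ℕ)+1, by omega⟩ := by
    intro i
    rw [matching_adj]
    constructor
    · intro h
      have := congrArg Fin.val h
      simp at this
    · show (2*(i:ℕ))/2 = (2*(i:ℕ)+1)/2
      omega
  set f : Fin t → Fin n := fun i =>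
    if ((φ ⟨2*(i:ℕ), by omega⟩ : Fin n) : ℕ) < t-1 then φ ⟨2*(i:ℕ), by omega⟩
    else φ ⟨2*(i:ℕ)+1, by omega⟩ with hf
  have hmem : ∀ i : Fin t, ((f i : Fin n) : ℕ) < t - 1 := by
    intro i
    have h := φ.map_adj (hadj i)
    rw [hubGraph_adj] at h
    obtain ⟨hne, h | h⟩ := h
    · simp only [hf]
      rw [if_pos h.1]; exact h.1
    · simp only [hf]
      by_cases hc : ((φ ⟨2*(i:ℕ), by omega⟩ : Fin n) : ℕ) < t-1
      · rw [if_pos hc]; exact hc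
      · rw [if_neg hc]; exact h.1
  have hpre : ∀ i : Fin t, ∃ x : Fin (2*t), φ x = f i ∧ (x : ℕ) / 2 = (i : ℕ) := by
    intro i
    simp only [hf]
    by_cases hc : ((φ ⟨2*(i:ℕ), by omega⟩ : Fin n) : ℕ) < t-1
    · exact ⟨⟨2*(i:ℕ), by omega⟩, by rw [if_pos hc], by show (2*(i:ℕ))/2 = (i:ℕ); omega⟩
    · exact ⟨⟨2*(i:ℕ)+1, by omega⟩, by rw [if_neg hc], by show (2*(i:ℕ)+1)/2 = (i:ℕ); omega⟩
  have hinj : Function.Injective f := by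
    intro i j hij
    obtain ⟨x, hx, hx2⟩ := hpre i
    obtain ⟨y, hy, hy2⟩ := hpre j
    have hxy : x = y := hφ (by rw [hx, hy, hij])
    subst hxy
    exact Fin.ext (by omega)
  have hle : t ≤ t - 1 := by
    have h1 := Finset.card_le_card_of_injOn f (s := (univ : Finset (Fin t)))
      (t := univ.filter fun v : Fin n => (v : ℕ) < t-1)
      (fun i _ => by simp only [Finset.mem_coe, Finset.mem_filter, Finset.mem_univ, true_and]; exact hmem i)
      (fun a _ b _ h => hinj h)
    have h2 := hub_card_le (t-1) n
    simpa using h1.trans h2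
  omega

private lemma bddAbove_exSet (n : ℕ) {V : Type*} (G : SimpleGraph V) :
    BddAbove {m | ∃ H : SimpleGraph (Fin n), H.edgeSet.ncard = m ∧ ¬ Contains G H} := by
  refine ⟨Fintype.card (Sym2 (Fin n)), ?_⟩
  rintro m ⟨H, rfl, -⟩
  have := Set.ncard_le_ncard (Set.subset_univ H.edgeSet) (Set.toFinite _)
  rwa [Set.ncard_univ, Nat.card_eq_fintype_card] at this

private lemma le_exNum {n : ℕ} {V : Type*} {G : SimpleGraph V} (H : SimpleGraph (Fin n))
    (h : ¬ Contains G H) : H.edgeSet.ncard ≤ exNum n G :=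
  le_csSup (bddAbove_exSet n G) ⟨H, rfl, h⟩

private lemma exNum_ge_hub (t n : ℕ) (ht : 1 ≤ t) (hk : t - 1 ≤ n) :
    (t - 1) * (n - (t-1)) ≤ exNum n (matching t) := by
  have := le_exNum (hubGraph (t-1) n) (hubGraph_not_contains t n ht)
  rwa [hubGraph_edges (t-1) n hk] at this

private lemma exNum_ge_all (t n : ℕ) (hn : n < 2*t) (H : SimpleGraph (Fin n)) :
    H.edgeSet.ncard ≤ exNum n (matching t) := by
  apply le_exNum
  rintro ⟨φ, hφ⟩
  have := Fintype.card_le_of_injective φ hφ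
  simp only [Fintype.card_fin] at this
  omega

set_option maxHeartbeats 2000000 in
/-- for t ≥ 2 there is C_t > 0 such that every n-vertex graph with more
than ex(n, tK₂) edges and maximum degree ≤ n/3 contains at least C_t·n^t copies
of tK₂. -/

theorem stmt12 (t : ℕ) (ht : 2 ≤ t) :
    ∃ C : ℝ, 0 < C ∧ ∀ (n : ℕ) (H : SimpleGraph (Fin n)),
      exNum n (matching t) < H.edgeSet.ncard →
      (∀ v, 3 * {w | H.Adj v w}.ncard ≤ n) →
      C * (n : ℝ)^t ≤
        (({s : Finset (Sym2 (Fin n)) | s.card = t ∧ ↑s ⊆ H.edgeSet ∧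
          ∀ e ∈ s, ∀ e' ∈ s, e ≠ e' → sym2Disjoint e e'}).ncard : ℝ) := by
  classical
  refine ⟨1 / (12^t * t.factorial), by positivity, ?_⟩
  intro n H hex hdeg
  by_cases hn1 : n < 2*t
  · exact absurd hex (not_lt.2 (exNum_ge_all t n hn1 H))
  push_neg at hn1
  have hk : t - 1 ≤ n := by omega
  have hexlb : (t-1) * (n - (t-1)) < H.edgeSet.ncard :=
    lt_of_le_of_lt (exNum_ge_hub t n (by omega) hk) hex
  -- degrees
  have hdeg' : ∀ v, 3 * H.degree v ≤ n := by
    intro v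
    have h := hdeg v
    rwa [show {w | H.Adj v w} = H.neighborSet v from rfl, Set.ncard_eq_toFinset_card',
      show (H.neighborSet v).toFinset = H.neighborFinset v from rfl] at h
  have hcard : H.edgeFinset.card = H.edgeSet.ncard := (Set.ncard_eq_toFinset_card' _).symm
  -- handshake
  have hhand : 6 * H.edgeSet.ncard ≤ n * n := by
    have h1 : ∑ v : Fin n, H.degree v = 2 * H.edgeFinset.card :=
      H.sum_degrees_eq_twice_card_edges
    calc 6 * H.edgeSet.ncard = 3 * (2 * H.edgeFinset.card) := by rw [hcard]; ring
      _ = 3 * ∑ v : Fin n, H.degree v := by rw [h1]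
      _ = ∑ v : Fin n, 3 * H.degree v := by rw [Finset.mul_sum]
      _ ≤ ∑ _v : Fin n, n := Finset.sum_le_sum (fun v _ => hdeg' v)
      _ = n * n := by rw [Finset.sum_const, Finset.card_univ, Fintype.card_fin, smul_eq_mul]
  by_cases hn2 : n ≤ 4*t - 4
  · -- contradiction region
    exfalso
    have c1 : ((t:ℝ) - 1) * ((n:ℝ) - ((t:ℝ) - 1)) + 1 ≤ (H.edgeSet.ncard : ℝ) := by
      have : (t-1) * (n - (t-1)) + 1 ≤ H.edgeSet.ncard := hexlb
      have hc := Nat.cast_le (α := ℝ) |>.2 this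
      push_cast [Nat.cast_sub hk, Nat.cast_sub (show 1 ≤ t by omega)] at hc
      linarith
    have c2 : 6 * (H.edgeSet.ncard : ℝ) ≤ (n:ℝ) * n := by exact_mod_cast hhand
    have c3 : 2 * (t:ℝ) ≤ n := by exact_mod_cast hn1
    have c4 : (n:ℝ) ≤ 4*t - 4 := by
      have : (n:ℝ) ≤ ((4*t - 4 : ℕ) : ℝ) := by exact_mod_cast hn2
      have h4 : ((4*t - 4 : ℕ) : ℝ) = 4*(t:ℝ) - 4 := by
        push_cast [Nat.cast_sub (show 4 ≤ 4*t by omega)]; ring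
      linarith [h4 ▸ this]
    have c5 : (2:ℝ) ≤ t := by exact_mod_cast ht
    nlinarith [mul_nonneg (by linarith : (0:ℝ) ≤ (n:ℝ) - 2*t) (by linarith : (0:ℝ) ≤ 4*(t:ℝ) - 4 - n)]
  -- main region : n ≥ 4t-3
  push_neg at hn2
  have hn3 : 4*t - 3 ≤ n := by omega
  set E : Finset (Sym2 (Fin n)) := H.edgeSet.toFinset with hE
  have hEcard : E.card = H.edgeSet.ncard := (Set.ncard_eq_toFinset_card' _).symm
  set D : ℝ := 2*(n:ℝ)/3 with hD
  -- real abbreviations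
  set N : ℝ := (n : ℝ) with hN
  set a : ℝ := (t:ℝ) - 1 with ha
  clear_value D N a
  have hc5 : (2:ℝ) ≤ t := by exact_mod_cast ht
  have ha1 : 1 ≤ a := by rw [ha]; linarith
  have hNlb : 4*(t:ℝ) - 3 ≤ N := by
    have : ((4*t - 3 : ℕ) : ℝ) ≤ N := by rw [hN]; exact_mod_cast hn3
    have h4 : ((4*t - 3 : ℕ) : ℝ) = 4*(t:ℝ) - 3 := by
      push_cast [Nat.cast_sub (show 3 ≤ 4*t by omega)]; ring
    linarith [h4 ▸ this]
  have helb : a * (N - a) + 1 ≤ (E.card : ℝ) := by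
    have : (t-1) * (n - (t-1)) + 1 ≤ E.card := by rw [hEcard]; exact hexlb
    have hc := Nat.cast_le (α := ℝ) |>.2 this
    push_cast [Nat.cast_sub hk, Nat.cast_sub (show 1 ≤ t by omega)] at hc
    rw [ha, hN]; linarith
  have haloN : 4*a + 1 ≤ N := by rw [ha]; linarith
  have hfactor : N/12 ≤ a * (N - a) + 1 - a * D := by
    rw [hD]
    nlinarith [mul_nonneg (by linarith : (0:ℝ) ≤ a - 1) (by nlinarith : (0:ℝ) ≤ N/3 - a)]
  -- the blocking bound
  have hblock : ∀ e ∈ E, ((E.filter (fun e' => ¬ sym2Disjoint e e')).card : ℝ) ≤ D := by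
    intro ed hed
    induction ed using Sym2.ind with
    | _ x y =>
      have hxy : H.Adj x y := by
        rw [hE, Set.mem_toFinset, SimpleGraph.mem_edgeSet] at hed
        exact hed
      have hsub : E.filter (fun e' => ¬ sym2Disjoint s(x,y) e')
          ⊆ H.incidenceFinset x ∪ H.incidenceFinset y := by
        intro e' he'
        rw [Finset.mem_filter] at he'
        obtain ⟨he'E, hnd⟩ := he'
        rw [hE, Set.mem_toFinset] at he'E
        simp only [sym2Disjoint, not_forall] at hnd
        obtain ⟨v, hv1, hv2⟩ := hnd
        simp only [not_not] at hv2
        rw [Finset.mem_union, SimpleGraph.mem_incidenceFinset, SimpleGraph.mem_incidenceFinset]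
        rcases Sym2.mem_iff.1 hv1 with rfl | rfl
        · exact Or.inl ⟨he'E, hv2⟩
        · exact Or.inr ⟨he'E, hv2⟩
      have hcard1 : (E.filter (fun e' => ¬ sym2Disjoint s(x,y) e')).card
          ≤ H.degree x + H.degree y := by
        calc (E.filter (fun e' => ¬ sym2Disjoint s(x,y) e')).card
            ≤ (H.incidenceFinset x ∪ H.incidenceFinset y).card := Finset.card_le_card hsub
          _ ≤ (H.incidenceFinset x).card + (H.incidenceFinset y).card := Finset.card_union_le _ _
          _ = H.degree x + H.degree y := by
              rw [SimpleGraph.card_incidenceFinset_eq_degree, SimpleGraph.card_incidenceFinset_eq_degree]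
      have hdx := hdeg' x
      have hdy := hdeg' y
      have : ((E.filter (fun e' => ¬ sym2Disjoint s(x,y) e')).card : ℝ)
          ≤ (H.degree x : ℝ) + (H.degree y : ℝ) := by exact_mod_cast hcard1
      have hx3 : 3 * (H.degree x : ℝ) ≤ N := by rw [hN]; exact_mod_cast hdx
      have hy3 : 3 * (H.degree y : ℝ) ≤ N := by rw [hN]; exact_mod_cast hdy
      rw [hD]; linarith
  have hle : ∀ i : ℕ, i < t → (i : ℝ) * D ≤ (E.card : ℝ) := by
    intro i hi
    have hia : (i : ℝ) ≤ a := by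
      rw [ha]
      have : (i:ℝ) ≤ (t:ℝ) - 1 := by
        have : (i:ℝ) + 1 ≤ t := by exact_mod_cast hi
        linarith
      exact this
    have hD0 : 0 ≤ D := by rw [hD, hN]; positivity
    have h1 : (i:ℝ) * D ≤ a * D := mul_le_mul_of_nonneg_right hia hD0
    have hN12 : (0:ℝ) ≤ N/12 := by rw [hN]; positivity
    linarith [hfactor, helb]
  have hmc := matchCount n E D hblock t hle
  -- lower bound the product
  have hprodlb : (N/12)^t ≤ ∏ i ∈ Finset.range t, ((E.card : ℝ) - i * D) := by
    have hN12 : (0:ℝ) ≤ N/12 := by rw [hN]; positivity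
    calc (N/12)^t = ∏ _i ∈ Finset.range t, (N/12) := by
          rw [Finset.prod_const, Finset.card_range]
      _ ≤ ∏ i ∈ Finset.range t, ((E.card : ℝ) - i * D) := by
          apply Finset.prod_le_prod (fun i _ => hN12)
          intro i hi
          have hia : (i : ℝ) ≤ a := by
            rw [ha]
            have : (i:ℝ) + 1 ≤ t := by exact_mod_cast Finset.mem_range.1 hi
            linarith
          have hD0 : 0 ≤ D := by rw [hD, hN]; positivity
          have h1 : (i:ℝ) * D ≤ a * D := mul_le_mul_of_nonneg_right hia hD0
          linarith [hfactor, helb]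
  -- identify the target set with the finset
  have hSeq : {s : Finset (Sym2 (Fin n)) | s.card = t ∧ ↑s ⊆ H.edgeSet ∧
      ∀ e ∈ s, ∀ e' ∈ s, e ≠ e' → sym2Disjoint e e'}
      = (((E.powersetCard t).filter
          (fun s => ∀ e ∈ s, ∀ e' ∈ s, e ≠ e' → sym2Disjoint e e')) : Set (Finset (Sym2 (Fin n)))) := by
    ext s
    simp only [Set.mem_setOf_eq, Finset.coe_filter, Finset.mem_powersetCard, Set.mem_setOf_eq]
    constructor
    · rintro ⟨h1, h2, h3⟩
      exact ⟨⟨by rw [hE]; exact Set.subset_toFinset.2 h2, h1⟩, h3⟩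
    · rintro ⟨⟨h1, h2⟩, h3⟩
      refine ⟨h2, ?_, h3⟩
      rw [hE] at h1
      exact Set.subset_toFinset.1 h1
  rw [hSeq, Set.ncard_coe_finset]
  -- final arithmetic
  have hfacpos : (0:ℝ) < (t.factorial : ℝ) := by positivity
  have hfinal : (N/12)^t ≤ (t.factorial : ℝ) * (((E.powersetCard t).filter
      (fun s => ∀ e ∈ s, ∀ e' ∈ s, e ≠ e' → sym2Disjoint e e')).card : ℝ) :=
    le_trans hprodlb hmc
  rw [div_pow] at hfinal
  rw [hN] at hfinal
  set Mc : ℝ := (((E.powersetCard t).filter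
      (fun s => ∀ e ∈ s, ∀ e' ∈ s, e ≠ e' → sym2Disjoint e e')).card : ℝ) with hMc
  have h12 : (0:ℝ) < (12:ℝ)^t := by positivity
  have h2 : (n:ℝ)^t ≤ (t.factorial:ℝ) * Mc * 12^t := (div_le_iff₀ h12).1 hfinal
  have h3 : (0:ℝ) < 12^t * (t.factorial:ℝ) := by positivity
  rw [div_mul_eq_mul_div, one_mul, div_le_iff₀ h3]
  rw [← hN] at h2
  nlinarith [h2]
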